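/- arXiv:2506.05113 — 5 statements merged into one kernel-verified Lean document; each statement's English description precedes it below -/
import Mathlib

section
/- Let C₁ : ℝ → ℝ be a continuous even function satisfying |C₁(t)| ≤ c/(1+|t|) for some c > 0. Define γ²(ρ) = ρ^{−2} ∫_{−ρ}^ρ ∫_{−ρ}^ρ sgn(t₁) sgn(t₂) C₁(t₁ − t₂) dt₁ dt₂. Then γ²(ρ) = O(ln ρ / ρ) as ρ → ∞; in particular γ²(ρ) → 0. -/
open MeasureTheory Filter Real

lemma abs_realSign_le_one (x : ℝ) : |Real.sign x| ≤ 1 := by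
  rcases lt_trichotomy x 0 with h | h | h
  · simp [Real.sign_of_neg h]
  · simp [h, Real.sign_zero]
  · simp [Real.sign_of_pos h]

lemma int_aux (c : ℝ) (R : ℝ) (hR : 0 ≤ R) :
    ∫ s in (-R)..R, c / (1 + |s|) = 2 * c * Real.log (1 + R) := by
  have hfc : Continuous fun s : ℝ => c / (1 + |s|) :=
    continuous_const.div (by continuity) fun x => by positivity
  have h1 : ∫ s in (0:ℝ)..R, c / (1 + |s|) = c * Real.log (1 + R) := by
    have e1 : ∫ s in (0:ℝ)..R, c / (1 + |s|) = ∫ s in (0:ℝ)..R, c * (1 + s)⁻¹ := by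
      apply intervalIntegral.integral_congr
      intro s hs
      rw [Set.uIcc_of_le hR] at hs
      show c / (1 + |s|) = c * (1 + s)⁻¹
      rw [abs_of_nonneg hs.1, div_eq_mul_inv]
    rw [e1, intervalIntegral.integral_const_mul]
    have e2 := intervalIntegral.integral_comp_add_left (a := (0:ℝ)) (b := R)
      (fun u : ℝ => u⁻¹) 1
    simp only [add_zero] at e2
    rw [e2, integral_inv (by
      intro h
      rw [Set.uIcc_of_le (by linarith)] at h
      linarith [h.1])]
    rw [div_one]
  have hneg : ∫ s in (-R)..(0:ℝ), c / (1 + |s|) = ∫ s in (0:ℝ)..R, c / (1 + |s|) := by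
    have := intervalIntegral.integral_comp_neg (a := (0:ℝ)) (b := R)
      (fun s : ℝ => c / (1 + |s|))
    simp only [abs_neg, neg_zero] at this
    rw [← this]
  have hadd : ∫ s in (-R)..R, c / (1 + |s|)
      = (∫ s in (-R)..(0:ℝ), c / (1 + |s|)) + ∫ s in (0:ℝ)..R, c / (1 + |s|) :=
    (intervalIntegral.integral_add_adjacent_intervals
      (hfc.intervalIntegrable _ _) (hfc.intervalIntegrable _ _)).symm
  rw [hadd, hneg, h1]; ring

/-- If `C₁` is continuous, even, and `|C₁(t)| ≤ c/(1+|t|)`, then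
`γ²(ρ) = ρ⁻² ∫_{−ρ}^ρ ∫_{−ρ}^ρ sgn(t₁) sgn(t₂) C₁(t₁−t₂) dt₁ dt₂` is
`O(ln ρ / ρ)` as `ρ → ∞`; in particular it tends to `0`. -/
theorem gamma_sq_decay (C₁ : ℝ → ℝ) (hcont : Continuous C₁)
    (heven : ∀ t, C₁ (-t) = C₁ t) (c : ℝ) (hc : 0 < c)
    (hdecay : ∀ t, |C₁ t| ≤ c / (1 + |t|))
    (γsq : ℝ → ℝ)
    (hγ : ∀ ρ, γsq ρ =
      ρ^(-2 : ℤ) * ∫ t₁ in (-ρ)..ρ, ∫ t₂ in (-ρ)..ρ,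
        Real.sign t₁ * Real.sign t₂ * C₁ (t₁ - t₂)) :
    (∃ c' > 0, ∀ᶠ ρ in atTop, |γsq ρ| ≤ c' * Real.log ρ / ρ) ∧
      Tendsto γsq atTop (nhds 0) := by
  have hfc : Continuous fun s : ℝ => c / (1 + |s|) :=
    continuous_const.div (by continuity) fun x => by positivity
  have key : ∀ ρ : ℝ, 3 ≤ ρ → |γsq ρ| ≤ 8 * c * Real.log ρ / ρ := by
    intro ρ hρ
    have hρ0 : (0:ℝ) < ρ := by linarith
    have hlog0 : 0 ≤ Real.log (1 + 2 * ρ) := Real.log_nonneg (by linarith)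
    set B : ℝ := 2 * c * Real.log (1 + 2 * ρ) with hBdef
    have hB0 : 0 ≤ B := by positivity
    -- inner integral bound
    have inner : ∀ t₁ ∈ Set.uIoc (-ρ) ρ,
        ‖∫ t₂ in (-ρ)..ρ, Real.sign t₁ * Real.sign t₂ * C₁ (t₁ - t₂)‖ ≤ B := by
      intro t₁ ht₁
      rw [Set.uIoc_of_le (by linarith : -ρ ≤ ρ)] at ht₁
      have ht₁l : -ρ ≤ t₁ := ht₁.1.le
      have ht₁r : t₁ ≤ ρ := ht₁.2
      have hint : IntervalIntegrable (fun t₂ : ℝ => c / (1 + |t₁ - t₂|)) volume (-ρ) ρ :=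
        (hfc.comp (continuous_const.sub continuous_id)).intervalIntegrable _ _
      have step1 : ‖∫ t₂ in (-ρ)..ρ, Real.sign t₁ * Real.sign t₂ * C₁ (t₁ - t₂)‖
          ≤ |∫ t₂ in (-ρ)..ρ, c / (1 + |t₁ - t₂|)| := by
        refine intervalIntegral.norm_integral_le_abs_of_norm_le (Filter.Eventually.of_forall ?_) hint
        intro t
        have h1 : ‖Real.sign t₁ * Real.sign t * C₁ (t₁ - t)‖ ≤ |C₁ (t₁ - t)| := by
          rw [Real.norm_eq_abs, abs_mul, abs_mul]
          calc |Real.sign t₁| * |Real.sign t| * |C₁ (t₁ - t)|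
              ≤ 1 * 1 * |C₁ (t₁ - t)| := by
                apply mul_le_mul_of_nonneg_right _ (abs_nonneg _)
                exact mul_le_mul (abs_realSign_le_one _) (abs_realSign_le_one _)
                  (abs_nonneg _) zero_le_one
            _ = |C₁ (t₁ - t)| := by ring
        exact h1.trans (hdecay _)
      have step2 : ∫ t₂ in (-ρ)..ρ, c / (1 + |t₁ - t₂|) ≤ B := by
        have e : ∫ t₂ in (-ρ)..ρ, c / (1 + |t₁ - t₂|)
            = ∫ s in (t₁ - ρ)..(t₁ + ρ), c / (1 + |s|) := by
          have := intervalIntegral.integral_comp_sub_left (a := -ρ) (b := ρ)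
            (fun s : ℝ => c / (1 + |s|)) t₁
          rw [this, sub_neg_eq_add]
        rw [e]
        have mono : ∫ s in (t₁ - ρ)..(t₁ + ρ), c / (1 + |s|)
            ≤ ∫ s in (-(2*ρ))..(2*ρ), c / (1 + |s|) := by
          apply intervalIntegral.integral_mono_interval (by linarith) (by linarith) (by linarith)
          · exact Filter.Eventually.of_forall fun x => by positivity
          · exact hfc.intervalIntegrable _ _
        calc ∫ s in (t₁ - ρ)..(t₁ + ρ), c / (1 + |s|)
            ≤ ∫ s in (-(2*ρ))..(2*ρ), c / (1 + |s|) := mono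
          _ = B := int_aux c (2*ρ) (by linarith)
      have h2nn : 0 ≤ ∫ t₂ in (-ρ)..ρ, c / (1 + |t₁ - t₂|) :=
        intervalIntegral.integral_nonneg (by linarith) fun x _ => by positivity
      calc ‖∫ t₂ in (-ρ)..ρ, Real.sign t₁ * Real.sign t₂ * C₁ (t₁ - t₂)‖
          ≤ |∫ t₂ in (-ρ)..ρ, c / (1 + |t₁ - t₂|)| := step1
        _ = ∫ t₂ in (-ρ)..ρ, c / (1 + |t₁ - t₂|) := abs_of_nonneg h2nn
        _ ≤ B := step2
    have outer : ‖∫ t₁ in (-ρ)..ρ, ∫ t₂ in (-ρ)..ρ,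
        Real.sign t₁ * Real.sign t₂ * C₁ (t₁ - t₂)‖ ≤ B * |ρ - (-ρ)| :=
      intervalIntegral.norm_integral_le_of_norm_le_const inner
    have habs : |ρ - (-ρ)| = 2 * ρ := by rw [abs_of_nonneg (by linarith)]; ring
    have hzpow : |(ρ:ℝ)^(-2:ℤ)| = (ρ^2)⁻¹ := by
      rw [zpow_neg, abs_inv, abs_of_nonneg (by positivity : (0:ℝ) ≤ ρ^(2:ℤ))]
      norm_cast
    have hbound1 : |γsq ρ| ≤ (ρ^2)⁻¹ * (B * (2 * ρ)) := by
      rw [hγ ρ, abs_mul, hzpow]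
      apply mul_le_mul_of_nonneg_left _ (by positivity)
      rw [← Real.norm_eq_abs, ← habs]
      exact outer
    have hlogle : Real.log (1 + 2 * ρ) ≤ 2 * Real.log ρ := by
      have : (1 + 2 * ρ) ≤ ρ ^ 2 := by nlinarith
      calc Real.log (1 + 2 * ρ) ≤ Real.log (ρ ^ 2) :=
            Real.log_le_log (by linarith) this
        _ = 2 * Real.log ρ := by rw [Real.log_pow]; norm_num
    calc |γsq ρ| ≤ (ρ^2)⁻¹ * (B * (2 * ρ)) := hbound1
      _ = 4 * c * Real.log (1 + 2 * ρ) / ρ := by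
          rw [hBdef]; field_simp; ring
      _ ≤ 8 * c * Real.log ρ / ρ := by
          rw [div_le_div_iff₀ hρ0 hρ0]
          have h4 : 4 * c * ρ * Real.log (1 + 2 * ρ) ≤ 4 * c * ρ * (2 * Real.log ρ) :=
            mul_le_mul_of_nonneg_left hlogle (by positivity)
          nlinarith [h4]
  have hev : ∀ᶠ ρ in atTop, |γsq ρ| ≤ 8 * c * Real.log ρ / ρ :=
    Filter.eventually_atTop.mpr ⟨3, key⟩
  refine ⟨⟨8 * c, by positivity, hev⟩, ?_⟩
  have hlim : Tendsto (fun ρ : ℝ => 8 * c * Real.log ρ / ρ) atTop (nhds 0) := by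
    have h0 : Tendsto (fun ρ : ℝ => Real.log ρ / ρ) atTop (nhds 0) :=
      Real.isLittleO_log_id_atTop.tendsto_div_nhds_zero
    have := h0.const_mul (8 * c)
    simp only [mul_zero] at this
    exact this.congr fun x => by ring
  exact squeeze_zero_norm' (hev.mono fun x hx => by rwa [Real.norm_eq_abs]) hlim
end

section
/- Let C₁ be a continuous even function with |C₁(t)| ≤ c/(1+|t|), and let f_T be the DTB function with f_T(t) → ±1/2 as t → ±∞. Define H_ρ = 2∫₀^1 f_T(ρs) ds and γ²(ρ) = 2∫₀^1∫₀^1 [C₁(ρ(s₁−s₂)) − C₁(ρ(s₁+s₂))] ds₁ ds₂. Then H_ρ/γ(ρ) → ∞ as ρ → ∞ (where γ(ρ) = √(γ²(ρ)), assuming γ²(ρ) > 0 for all large ρ). -/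
open MeasureTheory Filter Real

private lemma decay_lim (C₁ : ℝ → ℝ) (c : ℝ) (hc : 0 < c)
    (hdecay : ∀ t, |C₁ t| ≤ c / (1 + |t|)) (x : ℝ) (hx : x ≠ 0) :
    Tendsto (fun ρ : ℝ => C₁ (ρ * x)) atTop (nhds 0) := by
  have hb : Tendsto (fun ρ : ℝ => c / (1 + |ρ| * |x|)) atTop (nhds 0) := by
    apply Tendsto.div_atTop (tendsto_const_nhds)
    apply tendsto_atTop_add_const_left
    exact (tendsto_abs_atTop_atTop).atTop_mul_const (abs_pos.mpr hx)
  exact squeeze_zero_norm (fun ρ => by simpa [abs_mul] using hdecay (ρ * x)) hb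

/-- Signal-to-noise divergence in 1D: with `H_ρ = 2∫₀^1 f_T(ρs) ds` and
`γ²(ρ) = 2∫₀^1∫₀^1 [C₁(ρ(s₁−s₂)) − C₁(ρ(s₁+s₂))] ds₁ ds₂`, one has
`H_ρ/γ(ρ) → ∞` as `ρ → ∞`, assuming `γ²(ρ) > 0` for all large `ρ`. -/
theorem snr_tendsto_atTop (C₁ : ℝ → ℝ) (hcont : Continuous C₁)
    (hCeven : ∀ t, C₁ (-t) = C₁ t) (c : ℝ) (hc : 0 < c)
    (hdecay : ∀ t, |C₁ t| ≤ c / (1 + |t|))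
    (fT : ℝ → ℝ) (hfTcont : Continuous fT)
    (hfTtop : Tendsto fT atTop (nhds (1/2)))
    (hfTbot : Tendsto fT atBot (nhds (-(1/2))))
    (H γsq : ℝ → ℝ)
    (hH : ∀ ρ, H ρ = 2 * ∫ s in (0:ℝ)..1, fT (ρ * s))
    (hγ : ∀ ρ, γsq ρ = 2 * ∫ s₁ in (0:ℝ)..1, ∫ s₂ in (0:ℝ)..1,
        C₁ (ρ * (s₁ - s₂)) - C₁ (ρ * (s₁ + s₂)))
    (hpos : ∀ᶠ ρ in atTop, 0 < γsq ρ) :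
    Tendsto (fun ρ => H ρ / Real.sqrt (γsq ρ)) atTop atTop := by
  have hCbound : ∀ t, |C₁ t| ≤ c := fun t =>
    (hdecay t).trans (div_le_self hc.le (le_add_of_nonneg_right (abs_nonneg t)))
  have hIuIoc : Set.uIoc (0:ℝ) 1 = Set.Ioc 0 1 := Set.uIoc_of_le zero_le_one
  -- bound on fT on [0, ∞)
  obtain ⟨A, hA⟩ : ∃ A : ℝ, ∀ t ≥ A, |fT t| ≤ 1 := by
    have h1 : ∀ᶠ t in atTop, |fT t| ≤ 1 := by
      have := hfTtop.abs.eventually (eventually_le_nhds (by rw [abs_of_nonneg (by norm_num)]; norm_num : |(1:ℝ)/2| < 1))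
      exact this
    exact eventually_atTop.mp h1
  obtain ⟨M, hM⟩ := (isCompact_Icc (a := (0:ℝ)) (b := max A 0)).exists_bound_of_continuousOn
    hfTcont.continuousOn
  set B := max M 1 with hB
  have hfTB : ∀ t ≥ (0:ℝ), |fT t| ≤ B := by
    intro t ht
    rcases le_or_gt A t with h | h
    · exact (hA t h).trans (le_max_right _ _)
    · have : t ∈ Set.Icc (0:ℝ) (max A 0) := ⟨ht, le_max_of_le_left h.le⟩
      exact (hM t this).trans (le_max_left _ _)
  -- H → 1
  have hHlim : Tendsto H atTop (nhds 1) := by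
    have key : Tendsto (fun ρ : ℝ => ∫ s in (0:ℝ)..1, fT (ρ * s)) atTop
        (nhds (∫ s in (0:ℝ)..1, (1:ℝ)/2)) := by
      apply intervalIntegral.tendsto_integral_filter_of_dominated_convergence
        (bound := fun _ => B)
      · filter_upwards with ρ
        exact (hfTcont.comp (continuous_const.mul continuous_id)).aestronglyMeasurable
      · filter_upwards [eventually_ge_atTop (0:ℝ)] with ρ hρ
        filter_upwards with s hs
        rw [hIuIoc] at hs
        exact hfTB _ (mul_nonneg hρ hs.1.le)
      · exact intervalIntegrable_const
      · filter_upwards with s hs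
        rw [hIuIoc] at hs
        exact hfTtop.comp (tendsto_id.atTop_mul_const hs.1)
    have : Tendsto (fun ρ : ℝ => 2 * ∫ s in (0:ℝ)..1, fT (ρ * s)) atTop
        (nhds (2 * ∫ s in (0:ℝ)..1, (1:ℝ)/2)) := key.const_mul 2
    simp only [intervalIntegral.integral_const, smul_eq_mul] at this
    norm_num at this
    exact this.congr (fun ρ => (hH ρ).symm)
  -- γsq → 0
  have hγlim : Tendsto γsq atTop (nhds 0) := by
    have keyInner : ∀ s₁ ∈ Set.uIoc (0:ℝ) 1,
        Tendsto (fun ρ : ℝ => ∫ s₂ in (0:ℝ)..1,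
          C₁ (ρ * (s₁ - s₂)) - C₁ (ρ * (s₁ + s₂))) atTop (nhds 0) := by
      intro s₁ hs₁
      rw [hIuIoc] at hs₁
      have : Tendsto (fun ρ : ℝ => ∫ s₂ in (0:ℝ)..1,
          C₁ (ρ * (s₁ - s₂)) - C₁ (ρ * (s₁ + s₂))) atTop
          (nhds (∫ s₂ in (0:ℝ)..1, (0:ℝ))) := by
        apply intervalIntegral.tendsto_integral_filter_of_dominated_convergence
          (bound := fun _ => 2 * c)
        · filter_upwards with ρ
          exact ((hcont.comp (continuous_const.mul (continuous_const.sub continuous_id))).sub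
            (hcont.comp (continuous_const.mul (continuous_const.add continuous_id)))).aestronglyMeasurable
        · filter_upwards with ρ
          filter_upwards with s₂ hs₂
          calc |C₁ (ρ * (s₁ - s₂)) - C₁ (ρ * (s₁ + s₂))|
              ≤ |C₁ (ρ * (s₁ - s₂))| + |C₁ (ρ * (s₁ + s₂))| := abs_sub _ _
            _ ≤ c + c := add_le_add (hCbound _) (hCbound _)
            _ = 2 * c := by ring
        · exact intervalIntegrable_const
        · have hne : ∀ᵐ s₂ : ℝ, s₂ ≠ s₁ := by
            rw [ae_iff]
            simpa using (Real.volume_singleton (x := s₁))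
          filter_upwards [hne] with s₂ hne hs₂
          rw [hIuIoc] at hs₂
          have h1 := decay_lim C₁ c hc hdecay (s₁ - s₂) (sub_ne_zero.mpr (Ne.symm hne))
          have h2 := decay_lim C₁ c hc hdecay (s₁ + s₂) (add_pos hs₁.1 hs₂.1).ne'
          simpa using h1.sub h2
      simpa using this
    have key : Tendsto (fun ρ : ℝ => ∫ s₁ in (0:ℝ)..1, ∫ s₂ in (0:ℝ)..1,
        C₁ (ρ * (s₁ - s₂)) - C₁ (ρ * (s₁ + s₂))) atTop
        (nhds (∫ s₁ in (0:ℝ)..1, (0:ℝ))) := by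
      apply intervalIntegral.tendsto_integral_filter_of_dominated_convergence
        (bound := fun _ => 2 * c)
      · filter_upwards with ρ
        apply Continuous.aestronglyMeasurable
        apply intervalIntegral.continuous_parametric_intervalIntegral_of_continuous'
        apply Continuous.sub
        · exact hcont.comp (continuous_const.mul (continuous_fst.sub continuous_snd))
        · exact hcont.comp (continuous_const.mul (continuous_fst.add continuous_snd))
      · filter_upwards with ρ
        filter_upwards with s₁ hs₁
        have : ‖∫ s₂ in (0:ℝ)..1, C₁ (ρ * (s₁ - s₂)) - C₁ (ρ * (s₁ + s₂))‖ ≤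
            (2 * c) * |1 - 0| := by
          apply intervalIntegral.norm_integral_le_of_norm_le_const
          intro s₂ hs₂
          calc |C₁ (ρ * (s₁ - s₂)) - C₁ (ρ * (s₁ + s₂))|
              ≤ |C₁ (ρ * (s₁ - s₂))| + |C₁ (ρ * (s₁ + s₂))| := abs_sub _ _
            _ ≤ c + c := add_le_add (hCbound _) (hCbound _)
            _ = 2 * c := by ring
        simpa using this
      · exact intervalIntegrable_const
      · filter_upwards with s₁ hs₁
        exact keyInner s₁ hs₁
    have : Tendsto (fun ρ : ℝ => 2 * ∫ s₁ in (0:ℝ)..1, ∫ s₂ in (0:ℝ)..1,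
        C₁ (ρ * (s₁ - s₂)) - C₁ (ρ * (s₁ + s₂))) atTop (nhds (2 * ∫ s₁ in (0:ℝ)..1, (0:ℝ))) :=
      key.const_mul 2
    simp only [intervalIntegral.integral_const, smul_eq_mul, mul_zero] at this
    exact this.congr (fun ρ => (hγ ρ).symm)
  -- combine
  have hsqrt : Tendsto (fun ρ => Real.sqrt (γsq ρ)) atTop (nhds 0) := by
    have := (Real.continuous_sqrt.tendsto 0).comp hγlim
    simpa [Function.comp_def] using this
  have hsqrtpos : ∀ᶠ ρ in atTop, 0 < Real.sqrt (γsq ρ) := by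
    filter_upwards [hpos] with ρ h using Real.sqrt_pos.mpr h
  have hinv : Tendsto (fun ρ => (Real.sqrt (γsq ρ))⁻¹) atTop atTop := by
    apply Tendsto.inv_tendsto_nhdsGT_zero
    rw [tendsto_nhdsWithin_iff]
    exact ⟨hsqrt, hsqrtpos⟩
  have := hHlim.pos_mul_atTop (by norm_num : (0:ℝ) < 1) hinv
  simpa [div_eq_mul_inv] using this
end

section
/- Let f_T be the DTB function, f_T(t) = ∫_{-∞}^t φ(s) ds − 1/2 with ∫φ = 1 and φ compactly supported. Define h(ρ) = 4 ∫₀^ρ t √(ρ² − t²) f_T(t) dt. Then h(ρ)/ρ³ → 2/3 as ρ → ∞. -/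
open MeasureTheory Filter

lemma key_integral (ρ : ℝ) (hρ : 0 ≤ ρ) :
    ∫ t in (0:ℝ)..ρ, t * Real.sqrt (ρ^2 - t^2) = ρ^3 / 3 := by
  have hderiv : ∀ t ∈ Set.uIcc (0:ℝ) ρ,
      HasDerivAt (fun t : ℝ => -(1/3) * (ρ^2 - t^2) ^ (3/2 : ℝ))
        (t * Real.sqrt (ρ^2 - t^2)) t := by
    intro t _
    have h1 : HasDerivAt (fun t : ℝ => ρ^2 - t^2) (-(2*t)) t := by
      simpa using ((hasDerivAt_pow 2 t).const_sub (ρ^2))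
    have h2 := (Real.hasDerivAt_rpow_const (x := ρ^2 - t^2) (p := 3/2)
      (Or.inr (by norm_num))).comp t h1
    have h3 := h2.const_mul (-(1/3) : ℝ)
    refine h3.congr_deriv ?_
    have : ((3:ℝ)/2 - 1) = 1/2 := by norm_num
    rw [this, ← Real.sqrt_eq_rpow]
    ring
  have := intervalIntegral.integral_eq_sub_of_hasDerivAt hderiv ?_
  · rw [this]
    have h0 : ((ρ:ℝ)^2 - 0^2) = ρ^2 := by ring
    have hρ2 : ((ρ:ℝ)^2 - ρ^2) = 0 := by ring
    rw [h0, hρ2, Real.zero_rpow (by norm_num)]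
    have : ((ρ:ℝ)^2) ^ (3/2 : ℝ) = ρ^3 := by
      rw [← Real.rpow_natCast ρ 2, ← Real.rpow_mul hρ, ← Real.rpow_natCast ρ 3]
      norm_num
    rw [this]; ring
  · apply ContinuousOn.intervalIntegrable
    exact (continuousOn_id.mul ((continuousOn_const.sub
      (continuousOn_pow 2)).sqrt))

/-- With `f_T(t) = ∫_{-∞}^t φ(s) ds − 1/2`, `∫φ = 1`, `φ` integrable and compactly
supported, `h(ρ) = 4∫₀^ρ t √(ρ²−t²) f_T(t) dt` satisfies `h(ρ)/ρ³ → 2/3`. -/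
theorem h_rho_over_rho_cubed (φ : ℝ → ℝ) (hφ : Integrable φ)
    (hsupp : HasCompactSupport φ) (hint : ∫ s, φ s = 1)
    (fT : ℝ → ℝ) (hfT : ∀ t, fT t = (∫ s in Set.Iic t, φ s) - 1/2)
    (h : ℝ → ℝ)
    (hh : ∀ ρ, h ρ = 4 * ∫ t in (0:ℝ)..ρ, t * Real.sqrt (ρ^2 - t^2) * fT t) :
    Tendsto (fun ρ => h ρ / ρ^3) atTop (nhds (2/3)) := by
  -- get a bound M for the support
  obtain ⟨r, hr⟩ := hsupp.isBounded.subset_closedBall 0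
  set M : ℝ := max r 1 with hM
  have hM1 : (1:ℝ) ≤ M := le_max_right _ _
  have hM0 : (0:ℝ) < M := lt_of_lt_of_le one_pos hM1
  -- the error function e
  set e : ℝ → ℝ := fun t => (∫ s in Set.Iic t, φ s) - 1 with he
  have he_zero : ∀ t, M ≤ t → e t = 0 := by
    intro t ht
    have hzero : ∫ s in Set.Ioi t, φ s = 0 := by
      rw [setIntegral_congr_fun measurableSet_Ioi (g := fun _ => (0:ℝ))
        (fun x hx => by
          by_contra hne
          have hx' : x ∈ tsupport φ := subset_tsupport φ hne
          have := hr hx'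
          rw [Metric.mem_closedBall, Real.dist_eq, sub_zero] at this
          have : x ≤ r := le_trans (le_abs_self x) this
          have : x ≤ M := le_trans this (le_max_left r 1)
          exact absurd (lt_of_le_of_lt ht hx) (not_lt.mpr this))]
      simp
    have := intervalIntegral.integral_Iic_add_Ioi (b := t) hφ.integrableOn hφ.integrableOn
    simp only [he]
    rw [← hint, ← this, hzero]; ring
  -- bound on e
  set C : ℝ := (∫ s, |φ s|) + 1 with hC
  have hC0 : 0 ≤ C := by
    have : 0 ≤ ∫ s, |φ s| := integral_nonneg fun s => abs_nonneg _
    linarith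
  have he_bound : ∀ t, |e t| ≤ C := by
    intro t
    have h1 : |∫ s in Set.Iic t, φ s| ≤ ∫ s in Set.Iic t, |φ s| := by
      simpa using norm_integral_le_integral_norm (μ := volume.restrict (Set.Iic t)) φ
    have h2 : ∫ s in Set.Iic t, |φ s| ≤ ∫ s, |φ s| :=
      setIntegral_le_integral hφ.abs (Filter.Eventually.of_forall fun s => abs_nonneg _)
    calc |e t| ≤ |∫ s in Set.Iic t, φ s| + 1 := by
          simp only [he]; exact (abs_sub _ _).trans (by simp)
      _ ≤ C := by simp only [hC]; linarith
  -- continuity of e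
  have he_cont : Continuous e := by
    have : Continuous fun t => ∫ s in (0:ℝ)..t, φ s := hφ.continuous_primitive 0
    have heq : ∀ t, e t = (∫ s in Set.Iic 0, φ s) + (∫ s in (0:ℝ)..t, φ s) - 1 := by
      intro t
      have := intervalIntegral.integral_Iic_sub_Iic (a := (0:ℝ)) (b := t)
        hφ.integrableOn hφ.integrableOn
      simp only [he]; linarith
    simp only [funext heq]
    exact ((continuous_const.add this).sub continuous_const)
  -- key decomposition for ρ ≥ M
  have hdecomp : ∀ ρ : ℝ, M ≤ ρ → h ρ / ρ^3 - 2/3 =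
      (4 * ∫ t in (0:ℝ)..ρ, t * Real.sqrt (ρ^2 - t^2) * e t) / ρ^3 := by
    intro ρ hρ
    have hρ0 : (0:ℝ) < ρ := lt_of_lt_of_le hM0 hρ
    have hcont1 : Continuous fun t : ℝ => t * Real.sqrt (ρ^2 - t^2) :=
      continuous_id.mul ((continuous_const.sub (continuous_pow 2)).sqrt)
    have hint1 : IntervalIntegrable (fun t => t * Real.sqrt (ρ^2 - t^2) * (1/2))
        volume 0 ρ := ((hcont1.mul continuous_const).intervalIntegrable 0 ρ)
    have hint2 : IntervalIntegrable (fun t => t * Real.sqrt (ρ^2 - t^2) * e t)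
        volume 0 ρ := ((hcont1.mul he_cont).intervalIntegrable 0 ρ)
    have hsplit : (∫ t in (0:ℝ)..ρ, t * Real.sqrt (ρ^2 - t^2) * fT t) =
        (∫ t in (0:ℝ)..ρ, t * Real.sqrt (ρ^2 - t^2) * (1/2)) +
        (∫ t in (0:ℝ)..ρ, t * Real.sqrt (ρ^2 - t^2) * e t) := by
      rw [← intervalIntegral.integral_add hint1 hint2]
      apply intervalIntegral.integral_congr
      intro t _
      show t * Real.sqrt (ρ^2 - t^2) * fT t =
        t * Real.sqrt (ρ^2 - t^2) * (1/2) + t * Real.sqrt (ρ^2 - t^2) * e t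
      rw [hfT t]
      simp only [he]
      ring
    have hmain : (∫ t in (0:ℝ)..ρ, t * Real.sqrt (ρ^2 - t^2) * (1/2)) = ρ^3/6 := by
      rw [intervalIntegral.integral_mul_const, key_integral ρ hρ0.le]
      ring
    rw [hh ρ, hsplit, hmain]
    field_simp
    ring
  -- bound on the error term
  have hbound : ∀ ρ : ℝ, M ≤ ρ →
      |(4 * ∫ t in (0:ℝ)..ρ, t * Real.sqrt (ρ^2 - t^2) * e t) / ρ^3| ≤
        4 * M * C / ρ := by
    intro ρ hρ
    have hρ0 : (0:ℝ) < ρ := lt_of_lt_of_le hM0 hρ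
    have hEb : |∫ t in (0:ℝ)..ρ, t * Real.sqrt (ρ^2 - t^2) * e t| ≤ M * ρ * C * ρ := by
      have := intervalIntegral.norm_integral_le_of_norm_le_const
        (C := M * ρ * C) (f := fun t => t * Real.sqrt (ρ^2 - t^2) * e t)
        (a := 0) (b := ρ) ?_
      · rw [Real.norm_eq_abs] at this
        calc |∫ t in (0:ℝ)..ρ, t * Real.sqrt (ρ^2 - t^2) * e t|
            ≤ M * ρ * C * |ρ - 0| := this
          _ = M * ρ * C * ρ := by rw [sub_zero, abs_of_pos hρ0]
      · intro t ht
        rw [Set.uIoc_of_le hρ0.le] at ht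
        obtain ⟨ht0, htρ⟩ := ht
        rw [Real.norm_eq_abs]
        by_cases hcase : M ≤ t
        · simp only [he_zero t hcase, mul_zero, abs_zero]
          positivity
        · push_neg at hcase
          have hsq : Real.sqrt (ρ^2 - t^2) ≤ ρ := by
            calc Real.sqrt (ρ^2 - t^2) ≤ Real.sqrt (ρ^2) :=
                  Real.sqrt_le_sqrt (by nlinarith [sq_nonneg t])
              _ = ρ := Real.sqrt_sq hρ0.le
          calc |t * Real.sqrt (ρ^2 - t^2) * e t|
              = |t| * |Real.sqrt (ρ^2 - t^2)| * |e t| := by rw [abs_mul, abs_mul]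
            _ ≤ M * ρ * C := by
                apply mul_le_mul (mul_le_mul ?_ ?_ (abs_nonneg _) hM0.le)
                  (he_bound t) (abs_nonneg _)
                  (mul_nonneg hM0.le hρ0.le)
                · rw [abs_of_pos ht0]; exact hcase.le
                · rw [abs_of_nonneg (Real.sqrt_nonneg _)]; exact hsq
    rw [abs_div, abs_mul]
    rw [div_le_div_iff₀ (by positivity) hρ0]
    have h4 : |(4:ℝ)| = 4 := by norm_num
    rw [h4]
    have hρ3 : |ρ^3| = ρ^3 := abs_of_pos (by positivity)
    rw [hρ3]
    calc 4 * |∫ t in (0:ℝ)..ρ, t * Real.sqrt (ρ^2 - t^2) * e t| * ρ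
        ≤ 4 * (M * ρ * C * ρ) * ρ := by
          apply mul_le_mul_of_nonneg_right _ hρ0.le
          exact mul_le_mul_of_nonneg_left hEb (by norm_num)
      _ = 4 * M * C * ρ^3 := by ring
  -- conclude via squeeze
  have htends : Tendsto (fun ρ => h ρ / ρ^3 - 2/3) atTop (nhds 0) := by
    apply squeeze_zero_norm' (a := fun ρ => 4 * M * C / ρ)
    · filter_upwards [eventually_ge_atTop M] with ρ hρ
      rw [Real.norm_eq_abs, hdecomp ρ hρ]
      exact hbound ρ hρ
    · exact Tendsto.div_atTop tendsto_const_nhds tendsto_id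
  have := htends.add_const (2/3 : ℝ)
  simpa using this
end

section
/- Let C : ℝ² → ℝ be continuous with |C(x)| ≤ c/(1+|x|) for some c > 0. Define Ĉ_{ij}(ρ) = ∫_{B_ρ(0)} ∫_{B_ρ(0)} x_i y_j C(x − y) dx dy for i,j ∈ {1,2}. Then |Ĉ_{ij}(ρ)| = O(ρ⁵) as ρ → ∞. -/
open MeasureTheory Filter Metric Set

local notation "E2" => EuclideanSpace ℝ (Fin 2)

lemma coord_abs_le_norm (x : E2) (i : Fin 2) : |x i| ≤ ‖x‖ := by
  rw [EuclideanSpace.norm_eq]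
  have h1 : |x i| = Real.sqrt (|x i| ^ 2) := by
    rw [Real.sqrt_sq_eq_abs, abs_abs]
  rw [h1]
  apply Real.sqrt_le_sqrt
  exact Finset.single_le_sum (f := fun j => |x j| ^ 2) (fun j _ => sq_nonneg _) (Finset.mem_univ i)

/-- radial integral bound -/
lemma radial_bound (c : ℝ) (hc : 0 < c) {R : ℝ} (hR : 0 ≤ R) :
    ∫ z in closedBall (0 : E2) R, c / (1 + ‖z‖) ≤
      2 * (volume (ball (0 : E2) 1)).toReal * (c * R) := by
  set f : ℝ → ℝ := Set.indicator (Set.Icc 0 R) (fun r => c / (1 + r)) with hf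
  have key : ∫ z in closedBall (0 : E2) R, c / (1 + ‖z‖) = ∫ z : E2, f ‖z‖ := by
    rw [← integral_indicator (measurableSet_closedBall)]
    congr 1
    ext z
    by_cases hz : z ∈ closedBall (0 : E2) R
    · rw [Set.indicator_of_mem hz, hf, Set.indicator_of_mem]
      exact ⟨norm_nonneg z, by simpa [dist_eq_norm] using hz⟩
    · rw [Set.indicator_of_notMem hz, hf, Set.indicator_of_notMem]
      intro hmem
      exact hz (by simpa [dist_eq_norm] using hmem.2)
  rw [key, integral_fun_norm_addHaar volume f]
  simp only [finrank_euclideanSpace_fin, smul_eq_mul, nsmul_eq_mul, Nat.cast_ofNat, pow_one]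
  norm_num
  have h1 : ∫ r in Set.Ioi (0:ℝ), r * f r ≤ c * R := by
    have hint2 : Integrable (Set.indicator (Set.Icc 0 R) (fun _ => c)) (volume.restrict (Set.Ioi (0:ℝ))) := by
      apply Integrable.restrict
      rw [integrable_indicator_iff measurableSet_Icc]
      exact integrableOn_const measure_Icc_lt_top.ne
    have hb : ∀ r ∈ Set.Ioi (0:ℝ), ‖r * f r‖ ≤ Set.indicator (Set.Icc 0 R) (fun _ => c) r := by
      intro r hr
      by_cases hmem : r ∈ Set.Icc (0:ℝ) R
      · rw [hf, Set.indicator_of_mem hmem, Set.indicator_of_mem hmem]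
        have h1r : 0 < 1 + r := by linarith [hmem.1]
        rw [Real.norm_eq_abs, abs_of_nonneg (mul_nonneg hmem.1 (div_nonneg hc.le h1r.le))]
        rw [mul_div_assoc', div_le_iff₀ h1r]
        nlinarith [hmem.1, hc.le]
      · rw [hf, Set.indicator_of_notMem hmem, Set.indicator_of_notMem hmem]
        simp
    have hint1 : Integrable (fun r => r * f r) (volume.restrict (Set.Ioi (0:ℝ))) := by
      apply Integrable.mono' hint2
      · apply AEStronglyMeasurable.restrict
        apply (measurable_id.mul _).aestronglyMeasurable
        exact (Measurable.indicator (by fun_prop) measurableSet_Icc)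
      · exact (ae_restrict_iff' measurableSet_Ioi).2 (Filter.Eventually.of_forall hb)
    calc ∫ r in Set.Ioi (0:ℝ), r * f r
        ≤ ∫ r in Set.Ioi (0:ℝ), Set.indicator (Set.Icc 0 R) (fun _ => c) r := by
          apply setIntegral_mono_on hint1 hint2 measurableSet_Ioi
          intro r hr
          exact le_trans (le_abs_self _) (hb r hr)
      _ = ∫ r in Set.Ioi (0:ℝ) ∩ Set.Icc 0 R, c := by
          rw [setIntegral_indicator measurableSet_Icc]
      _ = (volume (Set.Ioc (0:ℝ) R)).toReal * c := by
          have hset : Set.Ioi (0:ℝ) ∩ Set.Icc 0 R = Set.Ioc 0 R := by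
            ext x
            simp only [Set.mem_inter_iff, Set.mem_Ioi, Set.mem_Icc, Set.mem_Ioc]
            constructor
            · rintro ⟨h1, _, h3⟩; exact ⟨h1, h3⟩
            · rintro ⟨h1, h2⟩; exact ⟨h1, h1.le, h2⟩
          rw [hset, setIntegral_const, smul_eq_mul, measureReal_def]
      _ ≤ c * R := by
          rw [Real.volume_Ioc, ENNReal.toReal_ofReal (by linarith)]
          rw [sub_zero, mul_comm]
  have hV : 0 ≤ (volume (ball (0 : E2) 1)).toReal := ENNReal.toReal_nonneg
  calc (2:ℕ) * ((volume (ball (0 : E2) 1)).toReal * ∫ r in Set.Ioi (0:ℝ), r * f r)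
      ≤ (2:ℕ) * ((volume (ball (0 : E2) 1)).toReal * (c * R)) := by
        gcongr
    _ = 2 * (volume (ball (0 : E2) 1)).toReal * (c * R) := by push_cast; ring
  norm_num

lemma translate_bound (c : ℝ) {ρ : ℝ} {x : E2} (hx : x ∈ closedBall (0 : E2) ρ)
    (hcint : IntegrableOn (fun z => c / (1 + ‖z‖)) (closedBall (0 : E2) (2 * ρ)))
    (hcnn : 0 ≤ c) :
    ∫ y in closedBall (0 : E2) ρ, c / (1 + ‖x - y‖) ≤
      ∫ z in closedBall (0 : E2) (2 * ρ), c / (1 + ‖z‖) := by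
  set g : E2 → ℝ := fun z => c / (1 + ‖z‖) with hg
  have hg0 : ∀ z : E2, 0 ≤ g z := fun z => div_nonneg hcnn (by positivity)
  set S : Set E2 := (fun z => x - z) ⁻¹' (closedBall (0 : E2) ρ) with hS
  have hSm : MeasurableSet S :=
    measurableSet_closedBall.preimage (measurable_const.sub measurable_id)
  have step1 : ∫ y in closedBall (0 : E2) ρ, g (x - y) = ∫ z in S, g z := by
    rw [← integral_indicator measurableSet_closedBall, ← integral_indicator hSm]
    rw [← integral_sub_left_eq_self
      (Set.indicator (closedBall (0 : E2) ρ) (fun y => g (x - y))) volume x]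
    congr 1
    funext z
    by_cases hz : x - z ∈ closedBall (0 : E2) ρ
    · rw [Set.indicator_of_mem hz, Set.indicator_of_mem (by exact hz), sub_sub_cancel]
    · rw [Set.indicator_of_notMem hz, Set.indicator_of_notMem (by exact hz)]
  rw [step1]
  apply setIntegral_mono_set hcint (Filter.Eventually.of_forall hg0)
  apply Filter.Eventually.of_forall
  intro z hz
  show z ∈ closedBall (0 : E2) (2 * ρ)
  have hz' : x - z ∈ closedBall (0 : E2) ρ := hz
  have hxz : ‖x - z‖ ≤ ρ := by simpa [dist_eq_norm] using hz'
  have hxn : ‖x‖ ≤ ρ := by simpa [dist_eq_norm] using hx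
  have : ‖z‖ ≤ 2 * ρ := by
    calc ‖z‖ = ‖x - (x - z)‖ := by rw [sub_sub_cancel]
    _ ≤ ‖x‖ + ‖x - z‖ := norm_sub_le _ _
    _ ≤ 2 * ρ := by linarith
  simpa [dist_eq_norm] using this

/-- If `C : ℝ² → ℝ` is continuous with `|C(x)| ≤ c/(1+|x|)`, then
`Ĉ_{ij}(ρ) = ∫_{B_ρ}∫_{B_ρ} x_i y_j C(x−y) dx dy` is `O(ρ⁵)` as `ρ → ∞`. -/
theorem covariance_matrix_growth (C : EuclideanSpace ℝ (Fin 2) → ℝ)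
    (hcont : Continuous C) (c : ℝ) (hc : 0 < c)
    (hdecay : ∀ x, |C x| ≤ c / (1 + ‖x‖))
    (Chat : ℝ → Fin 2 → Fin 2 → ℝ)
    (hChat : ∀ ρ i j, Chat ρ i j =
      ∫ x in Metric.closedBall (0 : EuclideanSpace ℝ (Fin 2)) ρ,
        ∫ y in Metric.closedBall (0 : EuclideanSpace ℝ (Fin 2)) ρ,
          x i * y j * C (x - y)) :
    ∃ c' > 0, ∀ᶠ ρ in atTop, ∀ i j, |Chat ρ i j| ≤ c' * ρ^5 := by
  set V := (volume (ball (0 : E2) 1)).toReal with hVdef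
  have hV : 0 < V :=
    ENNReal.toReal_pos (measure_ball_pos _ _ one_pos).ne' measure_ball_lt_top.ne
  refine ⟨4 * c * V ^ 2 + 1, by positivity, ?_⟩
  filter_upwards [eventually_ge_atTop (0 : ℝ)] with ρ hρ
  intro i j
  rw [hChat]
  have hgcont : Continuous (fun z : E2 => c / (1 + ‖z‖)) :=
    continuous_const.div (continuous_const.add continuous_norm) (fun z => by positivity)
  have hgint : IntegrableOn (fun z : E2 => c / (1 + ‖z‖)) (closedBall (0 : E2) (2 * ρ)) :=
    hgcont.continuousOn.integrableOn_compact (isCompact_closedBall _ _)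
  have inner : ∀ x ∈ closedBall (0 : E2) ρ,
      ‖∫ y in closedBall (0 : E2) ρ, x i * y j * C (x - y)‖ ≤
        ρ ^ 2 * (2 * V * (c * (2 * ρ))) := by
    intro x hx
    have hxn : ‖x‖ ≤ ρ := by simpa [dist_eq_norm] using hx
    have hcy : Continuous (fun y : E2 => x i * y j * C (x - y)) := by
      apply Continuous.mul
      · exact continuous_const.mul (by fun_prop)
      · exact hcont.comp (continuous_const.sub continuous_id)
    have hcint : IntegrableOn (fun y : E2 => x i * y j * C (x - y))
        (closedBall (0 : E2) ρ) :=
      hcy.continuousOn.integrableOn_compact (isCompact_closedBall _ _)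
    have hbcont : Continuous (fun y : E2 => ρ ^ 2 * (c / (1 + ‖x - y‖))) :=
      continuous_const.mul (hgcont.comp (continuous_const.sub continuous_id))
    have hbint : IntegrableOn (fun y : E2 => ρ ^ 2 * (c / (1 + ‖x - y‖)))
        (closedBall (0 : E2) ρ) :=
      hbcont.continuousOn.integrableOn_compact (isCompact_closedBall _ _)
    calc ‖∫ y in closedBall (0 : E2) ρ, x i * y j * C (x - y)‖
        ≤ ∫ y in closedBall (0 : E2) ρ, ‖x i * y j * C (x - y)‖ :=
          norm_integral_le_integral_norm _
      _ ≤ ∫ y in closedBall (0 : E2) ρ, ρ ^ 2 * (c / (1 + ‖x - y‖)) := by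
          apply setIntegral_mono_on hcint.norm hbint measurableSet_closedBall
          intro y hy
          have hyn : ‖y‖ ≤ ρ := by simpa [dist_eq_norm] using hy
          have h1 : |x i| ≤ ρ := le_trans (coord_abs_le_norm x i) hxn
          have h2 : |y j| ≤ ρ := le_trans (coord_abs_le_norm y j) hyn
          have h3 : |C (x - y)| ≤ c / (1 + ‖x - y‖) := hdecay _
          have habs : ‖x i * y j * C (x - y)‖ = |x i| * |y j| * |C (x - y)| := by
            rw [Real.norm_eq_abs, abs_mul, abs_mul]
          rw [habs]
          calc |x i| * |y j| * |C (x - y)| ≤ ρ * ρ * (c / (1 + ‖x - y‖)) := by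
                gcongr <;> positivity
            _ = ρ ^ 2 * (c / (1 + ‖x - y‖)) := by ring
      _ = ρ ^ 2 * ∫ y in closedBall (0 : E2) ρ, c / (1 + ‖x - y‖) :=
          integral_const_mul _ _
      _ ≤ ρ ^ 2 * (2 * V * (c * (2 * ρ))) := by
          have := le_trans (translate_bound c hx hgint hc.le)
            (radial_bound c hc (by linarith : (0:ℝ) ≤ 2 * ρ))
          exact mul_le_mul_of_nonneg_left this (by positivity)
  have houter := norm_setIntegral_le_of_norm_le_const
    (measure_closedBall_lt_top : volume (closedBall (0 : E2) ρ) < ⊤) inner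
  have hvol : (volume (closedBall (0 : E2) ρ)).toReal = ρ ^ 2 * V := by
    rw [Measure.addHaar_closedBall volume 0 hρ, finrank_euclideanSpace_fin,
      ENNReal.toReal_mul, ENNReal.toReal_ofReal (by positivity)]
  rw [Real.norm_eq_abs, measureReal_def] at houter
  rw [hvol] at houter
  refine le_trans houter ?_
  have h5 : 0 ≤ ρ ^ 5 := by positivity
  nlinarith [sq_nonneg ρ, sq_nonneg V, mul_nonneg h5 hV.le]
end

section
/- Suppose h(ρ) ≥ c₁ρ³ for large ρ (c₁ > 0), and the 2×2 symmetric positive definite covariance matrices Ĉ(ρ) satisfy trace(Ĉ(ρ)) ≤ c₂ρ⁵ for large ρ. Set H(ρ) = h(ρ)·e₁ ∈ ℝ². Then the noncentrality parameter μ(ρ) = H(ρ)ᵀ Ĉ(ρ)^{−1} H(ρ) satisfies μ(ρ) ≥ cρ for some c > 0 and all large ρ; in particular μ(ρ) → ∞. -/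
open Matrix Filter

/-- If the signal magnitude satisfies `h(ρ) ≥ c₁ρ³` for large `ρ`, and the
symmetric positive definite covariance matrices satisfy `trace(Ĉ(ρ)) ≤ c₂ρ⁵`
for large `ρ`, then the noncentrality parameter
`μ(ρ) = H(ρ)ᵀ Ĉ(ρ)⁻¹ H(ρ)` with `H(ρ) = h(ρ)·e₁` satisfies `μ(ρ) ≥ cρ` for
some `c > 0` and all large `ρ`; in particular `μ(ρ) → ∞`. -/
theorem noncentrality_growth (h : ℝ → ℝ) (c₁ c₂ : ℝ) (hc₁ : 0 < c₁) (hc₂ : 0 < c₂)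
    (Chat : ℝ → Matrix (Fin 2) (Fin 2) ℝ) (hpd : ∀ ρ, (Chat ρ).PosDef)
    (hh : ∀ᶠ ρ in atTop, c₁ * ρ^3 ≤ h ρ)
    (htr : ∀ᶠ ρ in atTop, (Chat ρ).trace ≤ c₂ * ρ^5)
    (H : ℝ → Fin 2 → ℝ) (hH : ∀ ρ, H ρ = fun i => if i = 0 then h ρ else 0)
    (μ : ℝ → ℝ) (hμ : ∀ ρ, μ ρ = H ρ ⬝ᵥ ((Chat ρ)⁻¹ *ᵥ H ρ)) :
    (∃ c > 0, ∀ᶠ ρ in atTop, c * ρ ≤ μ ρ) ∧ Tendsto μ atTop atTop := by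
  have hc : 0 < c₁^2 / c₂ := by positivity
  have key : ∀ᶠ ρ in atTop, (c₁^2 / c₂) * ρ ≤ μ ρ := by
    filter_upwards [hh, htr, eventually_gt_atTop 0] with ρ hhρ htrρ hρ0
    set A := Chat ρ with hA
    have pd := hpd ρ
    have h00 : 0 < A 0 0 := pd.dotProduct_mulVec_pos (x := fun i => if i = 0 then 1 else 0) (by
      intro hcon; simpa using congrFun hcon 0) |>.trans_eq (by
        simp [dotProduct, Matrix.mulVec, Fin.sum_univ_two]; rfl)
    have h11 : 0 < A 1 1 := pd.dotProduct_mulVec_pos (x := fun i => if i = 1 then 1 else 0) (by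
      intro hcon; simpa using congrFun hcon 1) |>.trans_eq (by
        simp [dotProduct, Matrix.mulVec, Fin.sum_univ_two]; rfl)
    have hdet : 0 < A.det := pd.det_pos
    have hsym : A 0 1 = A 1 0 := by rw [hA]; have := pd.1.apply 1 0; simp at this; linarith [this]
    have hdet2 : A.det = A 0 0 * A 1 1 - A 0 1 * A 1 0 := Matrix.det_fin_two A
    have htr2 : A.trace = A 0 0 + A 1 1 := Matrix.trace_fin_two A
    have hinv : A⁻¹ 0 0 = (A.det)⁻¹ * A 1 1 := by
      rw [Matrix.inv_def, Matrix.adjugate_fin_two]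
      simp [Ring.inverse_eq_inv]
    have hμρ : μ ρ = h ρ ^ 2 * ((A.det)⁻¹ * A 1 1) := by
      rw [hμ, hH, ← hinv]
      simp [dotProduct, Matrix.mulVec, Fin.sum_univ_two]
      ring
    rw [hμρ]
    have hhp : 0 < h ρ := lt_of_lt_of_le (by positivity) hhρ
    have hh2 : c₁^2 * ρ^6 ≤ h ρ ^ 2 := by nlinarith [mul_nonneg (sub_nonneg.2 hhρ) (by positivity : (0:ℝ) ≤ h ρ + c₁ * ρ^3)]
    have hA00 : A 0 0 ≤ c₂ * ρ^5 := by nlinarith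
    rw [div_mul_eq_mul_div, div_le_iff₀ hc₂, ← sub_nonneg]
    have hdetle : A.det ≤ A 0 0 * A 1 1 := by rw [hdet2, ← hsym]; nlinarith [sq_nonneg (A 0 1)]
    have e1 : c₁^2 * ρ * A.det ≤ c₁^2 * ρ * (c₂ * ρ^5 * A 1 1) := by
      have : A.det ≤ c₂ * ρ^5 * A 1 1 := hdetle.trans (by nlinarith)
      have h1 : 0 < c₁^2 * ρ := by positivity
      nlinarith
    have e2 : c₁^2 * ρ * (c₂ * ρ^5 * A 1 1) ≤ h ρ ^ 2 * (c₂ * A 1 1) := by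
      have := mul_le_mul_of_nonneg_right hh2 (le_of_lt (mul_pos hc₂ h11))
      nlinarith [this]
    have hfin : c₁^2 * ρ * A.det ≤ h ρ ^ 2 * (c₂ * A 1 1) := e1.trans e2
    have hd : (A.det)⁻¹ * A.det = 1 := inv_mul_cancel₀ hdet.ne'
    have key2 := mul_le_mul_of_nonneg_left hfin (le_of_lt (inv_pos.2 hdet))
    have lhs : (A.det)⁻¹ * (c₁^2 * ρ * A.det) = c₁^2 * ρ := by
      field_simp
    have rhs : (A.det)⁻¹ * (h ρ ^ 2 * (c₂ * A 1 1)) = h ρ ^ 2 * ((A.det)⁻¹ * A 1 1) * c₂ := by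
      ring
    rw [lhs, rhs] at key2
    linarith
  refine ⟨⟨c₁^2 / c₂, hc, key⟩, ?_⟩
  exact tendsto_atTop_mono' _ key (tendsto_id.const_mul_atTop hc)
end
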